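/- Let α be a well-ordered index set, let (X, d) be a metric space over the lexicographically ordered group ℝ^α (componentwise addition, lexicographic order). For distinct x, y ∈ X let n(x,y) be the least λ ∈ α with d(x,y)_λ ≠ 0. Define δ(x,x) = 0 and δ(x,y) = r^{n(x,y)} for x ≠ y, where r^λ ∈ ℤ^α is the indicator of {λ}. Then δ is a metric over ℤ^α satisfying the strong (ultrametric-type) inequality δ(x,y) ≤ max(δ(x,z), δ(z,y)) for all x, y, z. -/

import Mathlib

/-- A metric on `X` with values in a linearly ordered abelian group `G`. -/
structure IsGMetric {X G : Type*} [AddCommGroup G] [LinearOrder G] [IsOrderedAddMonoid G] (d : X → X → G) : Prop where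
  nonneg : ∀ x y, 0 ≤ d x y
  eq_zero_iff : ∀ x y, d x y = 0 ↔ x = y
  symm : ∀ x y, d x y = d y x
  triangle : ∀ x y z, d x y ≤ d x z + d z y

/-- The element `r^l` of `Lex (ι → R)`: indicator of the coordinate `l`. -/
def unitVec {ι R : Type*} [DecidableEq ι] [Zero R] [One R] (l : ι) : Lex (ι → R) :=
  toLex fun m => if m = l then 1 else 0

section Aux

set_option linter.unusedSectionVars false

variable {α : Type*} [LinearOrder α] [WellFoundedLT α]

lemma unitVec_pos (l : α) : (0 : Lex (α → ℤ)) < unitVec l := by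
  refine ⟨l, fun j hj => ?_, ?_⟩
  · show (0 : ℤ) = if j = l then 1 else 0
    simp [ne_of_lt hj]
  · show (0 : ℤ) < if l = l then 1 else 0
    simp

lemma unitVec_lt {m l : α} (h : m < l) : (unitVec l : Lex (α → ℤ)) < unitVec m := by
  refine ⟨m, fun j hj => ?_, ?_⟩
  · show (if j = l then (1:ℤ) else 0) = if j = m then 1 else 0
    simp [ne_of_lt hj, ne_of_lt (lt_trans hj h)]
  · show (if m = l then (1:ℤ) else 0) < if m = m then 1 else 0
    simp [ne_of_lt h]

lemma unitVec_le {m l : α} (h : m ≤ l) : (unitVec l : Lex (α → ℤ)) ≤ unitVec m := by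
  rcases h.lt_or_eq with h | rfl
  · exact (unitVec_lt h).le
  · exact le_rfl

lemma first_coord_pos {f : Lex (α → ℝ)} (hf : 0 ≤ f) {l : α}
    (h1 : ofLex f l ≠ 0) (h2 : ∀ m, m < l → ofLex f m = 0) : 0 < ofLex f l := by
  rcases h1.lt_or_gt with h | h
  · exfalso
    refine absurd hf (not_le.mpr ?_)
    exact ⟨l, fun j hj => by rw [show f j = ofLex f j from rfl, h2 j hj]; rfl, h⟩
  · exact h

end Aux

/-- Given a metric `d` over lexicographically ordered `ℝ^α` (`α` well-ordered),
with `n x y` the least coordinate where `d x y` is nonzero (for `x ≠ y`), the function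
`δ` with `δ x x = 0` and `δ x y = r^{n x y}` for `x ≠ y` is a metric over `ℤ^α`
satisfying the strong inequality `δ x y ≤ max (δ x z) (δ z y)`. -/
theorem stmt9 {α X : Type*} [LinearOrder α] [WellFoundedLT α]
    (d : X → X → Lex (α → ℝ)) (hd : IsGMetric d)
    (n : X → X → α)
    (hn : ∀ x y, x ≠ y →
      ofLex (d x y) (n x y) ≠ 0 ∧ ∀ m, m < n x y → ofLex (d x y) m = 0)
    (δ : X → X → Lex (α → ℤ)) (hδ0 : ∀ x, δ x x = 0)
    (hδ : ∀ x y, x ≠ y → δ x y = unitVec (n x y)) :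
    IsGMetric δ ∧ ∀ x y z, δ x y ≤ max (δ x z) (δ z y) := by
  -- nonnegativity
  have δnn : ∀ x y, 0 ≤ δ x y := by
    intro x y
    by_cases hxy : x = y
    · subst hxy; rw [hδ0]
    · rw [hδ x y hxy]; exact (unitVec_pos _).le
  -- symmetry of n
  have nsymm : ∀ x y, x ≠ y → n x y = n y x := by
    intro x y hxy
    obtain ⟨h1, h2⟩ := hn x y hxy
    obtain ⟨h1', h2'⟩ := hn y x (Ne.symm hxy)
    have hdsymm : d y x = d x y := (hd.symm x y).symm
    rcases lt_trichotomy (n x y) (n y x) with h | h | h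
    · exact absurd (hdsymm ▸ h2' _ h) h1
    · exact h
    · exact absurd (h2 _ h) (hdsymm ▸ h1')
  -- the key min inequality
  have key : ∀ x y z, x ≠ y → x ≠ z → z ≠ y →
      min (n x z) (n z y) ≤ n x y := by
    intro x y z hxy hxz hzy
    by_contra h
    push_neg at h
    rw [lt_min_iff] at h
    obtain ⟨hxz', hzy'⟩ := h
    have htri := hd.triangle x y z
    refine absurd htri (not_le.mpr ?_)
    refine ⟨n x y, fun j hj => ?_, ?_⟩
    · show ofLex (d x z) j + ofLex (d z y) j = ofLex (d x y) j
      rw [(hn x z hxz).2 j (hj.trans hxz'), (hn z y hzy).2 j (hj.trans hzy'),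
        (hn x y hxy).2 j hj, add_zero]
    · show ofLex (d x z) (n x y) + ofLex (d z y) (n x y) < ofLex (d x y) (n x y)
      rw [(hn x z hxz).2 _ hxz', (hn z y hzy).2 _ hzy', add_zero]
      exact first_coord_pos (hd.nonneg x y) (hn x y hxy).1 (hn x y hxy).2
  -- strong inequality
  have strong : ∀ x y z, δ x y ≤ max (δ x z) (δ z y) := by
    intro x y z
    by_cases hxy : x = y
    · subst hxy; rw [hδ0]
      exact le_trans (δnn x z) (le_max_left _ _)
    by_cases hxz : x = z
    · subst hxz; exact le_max_right _ _
    by_cases hzy : z = y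
    · subst hzy; exact le_max_left _ _
    rw [hδ x y hxy, hδ x z hxz, hδ z y hzy]
    have hk := key x y z hxy hxz hzy
    rcases min_cases (n x z) (n z y) with ⟨he, hle⟩ | ⟨he, hle⟩
    · exact le_trans (unitVec_le (he ▸ hk)) (le_max_left _ _)
    · exact le_trans (unitVec_le (he ▸ hk)) (le_max_right _ _)
  refine ⟨⟨δnn, ?_, ?_, ?_⟩, strong⟩
  · intro x y
    constructor
    · intro h
      by_contra hxy
      have h1 : unitVec (n x y) = (0 : Lex (α → ℤ)) := (hδ x y hxy).symm.trans h
      have h2 : ofLex (unitVec (n x y) : Lex (α → ℤ)) (n x y) = 0 := by rw [h1]; rfl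
      simp [unitVec] at h2
    · rintro rfl; exact hδ0 x
  · intro x y
    by_cases hxy : x = y
    · subst hxy; rfl
    · rw [hδ x y hxy, hδ y x (Ne.symm hxy), nsymm x y hxy]
  · intro x y z
    refine le_trans (strong x y z) (max_le ?_ ?_)
    · exact le_add_of_nonneg_right (δnn z y)
    · exact le_add_of_nonneg_left (δnn x z)
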